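/- Let g ∈ Equiv.Perm (Fin n) have disjoint cycle decomposition into t cycles of lengths ℓ 1, …, ℓ t, let G = ⟨g⟩ and d = orderOf g. Then the vertex-edge graph of P(G) is complete — i.e. for every pair of distinct elements u, v ∈ G the segment convexHull ℝ {M(u), M(v)} is an exposed face of P(G) — if and only if for every subset I ⊆ {1, …, t} one has d_I = d or d_{I^c} = d. -/

import Mathlib

/-- The permutation polytope of a subgroup `G` of permutations of `Fin n`:
the convex hull of the permutation matrices of elements of `G`. -/
noncomputable def permPolytope (n : ℕ) (G : Subgroup (Equiv.Perm (Fin n))) :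
    Set (Matrix (Fin n) (Fin n) ℝ) :=
  convexHull ℝ {M : Matrix (Fin n) (Fin n) ℝ | ∃ σ ∈ G, M = σ.permMatrix ℝ}

section AuxLemmas

open Equiv Equiv.Perm Finset

variable {n : ℕ}

private lemma permMatrix_apply (σ : Equiv.Perm (Fin n)) (x y : Fin n) :
    σ.permMatrix ℝ x y = if σ x = y then 1 else 0 := by
  rw [Equiv.Perm.permMatrix, PEquiv.toMatrix_toPEquiv_apply, Pi.single_apply]
  exact if_congr eq_comm rfl rfl

private lemma permMatrix_injective {σ τ : Equiv.Perm (Fin n)}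
    (h : σ.permMatrix ℝ = τ.permMatrix ℝ) : σ = τ := by
  ext x
  have h1 : σ.permMatrix ℝ x (σ x) = τ.permMatrix ℝ x (σ x) := by
    exact congrFun (congrFun h x) (σ x)
  rw [permMatrix_apply, permMatrix_apply, if_pos rfl] at h1
  by_contra hne
  rw [if_neg (fun hc => hne (congrArg Fin.val hc.symm))] at h1
  exact one_ne_zero h1

private lemma zpow_apply_eq_self_iff (g : Equiv.Perm (Fin n)) (x : Fin n) (j : ℤ) :
    (g ^ j) x = x ↔ (orderOf (g.cycleOf x) : ℤ) ∣ j := by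
  by_cases hx : g x = x
  · rw [(Equiv.Perm.cycleOf_eq_one_iff g).mpr hx]
    simp [Equiv.Perm.zpow_apply_eq_self_of_apply_eq_self hx]
  · have hc : (g.cycleOf x).IsCycle := Equiv.Perm.isCycle_cycleOf g hx
    have hxc : (g.cycleOf x) x ≠ x := by rwa [Equiv.Perm.cycleOf_apply_self]
    rw [← Equiv.Perm.cycleOf_zpow_apply_self, orderOf_dvd_iff_zpow_eq_one]
    set c := g.cycleOf x with hcdef
    constructor
    · intro h
      have hd : 0 < orderOf c := (orderOf_pos c)
      have hmod : c ^ j = c ^ (j % (orderOf c : ℤ)).toNat := by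
        rw [← zpow_natCast, Int.toNat_of_nonneg (Int.emod_nonneg j (by exact_mod_cast hd.ne')),
          zpow_mod_orderOf]
      rw [hmod] at h ⊢
      exact (hc.pow_eq_one_iff' hxc).mpr h
    · intro h; rw [h]; rfl

private lemma zpow_apply_eq_zpow_apply_iff (g : Equiv.Perm (Fin n)) (x : Fin n) (k b : ℤ) :
    (g ^ k) x = (g ^ b) x ↔ (orderOf (g.cycleOf x) : ℤ) ∣ (k - b) := by
  have h : g ^ k = g ^ b * g ^ (k - b) := by
    rw [← zpow_add]; ring_nf
  rw [h, Equiv.Perm.mul_apply, (g ^ b).apply_eq_iff_eq, zpow_apply_eq_self_iff]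

private lemma exists_point_with_cycle_length {t : ℕ} (ℓ : Fin t → ℕ) (hℓ : ∀ i, 2 ≤ ℓ i)
    (g : Equiv.Perm (Fin n)) (hg : g.cycleType = Multiset.map ℓ Finset.univ.val) (i : Fin t) :
    ∃ x : Fin n, orderOf (g.cycleOf x) = ℓ i := by
  have hmem : ℓ i ∈ g.cycleType := by
    rw [hg]; exact Multiset.mem_map.mpr ⟨i, Finset.mem_univ i, rfl⟩
  rw [Equiv.Perm.cycleType_def, Multiset.mem_map] at hmem
  obtain ⟨c, hc, hcard⟩ := hmem
  simp only [Function.comp_apply] at hcard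
  have hcyc : c.IsCycle := (Equiv.Perm.mem_cycleFactorsFinset_iff.mp hc).1
  have hsupp : c.support.Nonempty := by
    rw [← Finset.card_pos, hcard]; exact lt_of_lt_of_le (by norm_num) (hℓ i)
  obtain ⟨x, hx⟩ := hsupp
  have hco := Equiv.Perm.cycle_is_cycleOf hx hc
  exact ⟨x, by rw [← hco, hcyc.orderOf, hcard]⟩

private lemma cycle_length_mem {t : ℕ} (ℓ : Fin t → ℕ)
    (g : Equiv.Perm (Fin n)) (hg : g.cycleType = Multiset.map ℓ Finset.univ.val) (x : Fin n) :
    orderOf (g.cycleOf x) = 1 ∨ ∃ i, ℓ i = orderOf (g.cycleOf x) := by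
  by_cases hx : g x = x
  · left; rw [(Equiv.Perm.cycleOf_eq_one_iff g).mpr hx, orderOf_one]
  · right
    have hc : g.cycleOf x ∈ g.cycleFactorsFinset :=
      Equiv.Perm.cycleOf_mem_cycleFactorsFinset_iff.mpr (Equiv.Perm.mem_support.mpr hx)
    have hmem : (g.cycleOf x).support.card ∈ g.cycleType := by
      rw [Equiv.Perm.cycleType_def, Multiset.mem_map]
      exact ⟨g.cycleOf x, hc, rfl⟩
    rw [hg, Multiset.mem_map] at hmem
    obtain ⟨i, _, hi⟩ := hmem
    exact ⟨i, by rw [hi, (Equiv.Perm.isCycle_cycleOf g hx).orderOf]⟩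

private lemma lcm_eq_orderOf {t : ℕ} (ℓ : Fin t → ℕ)
    (g : Equiv.Perm (Fin n)) (hg : g.cycleType = Multiset.map ℓ Finset.univ.val) :
    Finset.univ.lcm ℓ = orderOf g := by
  rw [← Equiv.Perm.lcm_cycleType, hg]; rfl

/-- The linear functional used to expose the edge `[M(u), M(v)]`. -/
noncomputable def lfun (u v : Equiv.Perm (Fin n)) : Matrix (Fin n) (Fin n) ℝ →ₗ[ℝ] ℝ where
  toFun M := ∑ x, (M x (u x) + M x (v x))
  map_add' M N := by
    simp only [Matrix.add_apply]
    rw [← Finset.sum_add_distrib]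
    congr 1; ext x; ring
  map_smul' r M := by
    simp only [Matrix.smul_apply, smul_eq_mul, RingHom.id_apply]
    rw [Finset.mul_sum]
    congr 1; ext x; ring

private lemma lfun_eval (u v σ : Equiv.Perm (Fin n)) :
    lfun u v (σ.permMatrix ℝ) =
      ∑ x, ((if σ x = u x then (1:ℝ) else 0) + (if σ x = v x then (1:ℝ) else 0)) := by
  simp only [lfun, LinearMap.coe_mk, AddHom.coe_mk, permMatrix_apply]

private lemma term_le (u v σ : Equiv.Perm (Fin n)) (x : Fin n) :
    ((if σ x = u x then (1:ℝ) else 0) + (if σ x = v x then (1:ℝ) else 0)) ≤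
      ((if u x = u x then (1:ℝ) else 0) + (if u x = v x then (1:ℝ) else 0)) := by
  by_cases huv : u x = v x
  · split_ifs <;> simp_all
  · rw [if_pos rfl, if_neg huv]
    split_ifs with h1 h2
    · exact absurd (h1.symm.trans h2) huv
    · norm_num
    · norm_num
    · norm_num

private lemma lfun_le (u v σ : Equiv.Perm (Fin n)) :
    lfun u v (σ.permMatrix ℝ) ≤ lfun u v (u.permMatrix ℝ) := by
  rw [lfun_eval, lfun_eval]
  exact Finset.sum_le_sum fun x _ => term_le u v σ x

private lemma lfun_v_eq (u v : Equiv.Perm (Fin n)) :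
    lfun u v (v.permMatrix ℝ) = lfun u v (u.permMatrix ℝ) := by
  rw [lfun_eval, lfun_eval]
  congr 1; ext x
  by_cases huv : u x = v x <;> by_cases hvu : v x = u x <;> simp_all

private lemma eq_of_lfun_eq {t : ℕ} (ℓ : Fin t → ℕ) (hℓ : ∀ i, 2 ≤ ℓ i)
    (g : Equiv.Perm (Fin n)) (hg : g.cycleType = Multiset.map ℓ Finset.univ.val)
    (hI : ∀ I : Finset (Fin t), I.lcm ℓ = orderOf g ∨ Iᶜ.lcm ℓ = orderOf g)
    (b c k : ℤ)
    (h : lfun (g^b) (g^c) ((g^k).permMatrix ℝ) = lfun (g^b) (g^c) ((g^b).permMatrix ℝ)) :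
    g ^ k = g ^ b ∨ g ^ k = g ^ c := by
  classical
  rw [lfun_eval, lfun_eval] at h
  have hterm := (Finset.sum_eq_sum_iff_of_le
    (fun x _ => term_le (g^b) (g^c) (g^k) x)).mp h
  have cond : ∀ x : Fin n,
      ((orderOf (g.cycleOf x) : ℤ) ∣ c - b → (orderOf (g.cycleOf x) : ℤ) ∣ k - b) ∧
      (¬(orderOf (g.cycleOf x) : ℤ) ∣ c - b →
        ((orderOf (g.cycleOf x) : ℤ) ∣ k - b ∨ (orderOf (g.cycleOf x) : ℤ) ∣ k - c)) := by
    intro x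
    have hx := hterm x (Finset.mem_univ x)
    rw [if_pos rfl] at hx
    by_cases hbc : (g^b) x = (g^c) x
    · have hdvd : (orderOf (g.cycleOf x) : ℤ) ∣ c - b := by
        rw [← zpow_apply_eq_zpow_apply_iff g x c b]; exact hbc.symm
      rw [if_pos hbc] at hx
      constructor
      · intro _
        rw [← zpow_apply_eq_zpow_apply_iff g x k b]
        by_contra hkb
        rw [if_neg hkb, if_neg (fun hkc => hkb (hkc.trans hbc.symm))] at hx
        norm_num at hx
      · intro hn; exact absurd hdvd hn
    · have hndvd : ¬(orderOf (g.cycleOf x) : ℤ) ∣ c - b := by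
        rw [← zpow_apply_eq_zpow_apply_iff g x c b]
        exact fun hh => hbc hh.symm
      rw [if_neg hbc] at hx
      constructor
      · intro hd; exact absurd hd hndvd
      · intro _
        rw [← zpow_apply_eq_zpow_apply_iff g x k b, ← zpow_apply_eq_zpow_apply_iff g x k c]
        by_contra hor
        push_neg at hor
        rw [if_neg hor.1, if_neg hor.2] at hx
        norm_num at hx
  set I : Finset (Fin t) := Finset.univ.filter (fun i => (ℓ i : ℤ) ∣ (k - b)) with hIdef
  have hIdvd : ((I.lcm ℓ : ℕ) : ℤ) ∣ k - b := by
    rw [← Int.natAbs_dvd_natAbs, Int.natAbs_natCast]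
    apply Finset.lcm_dvd
    intro i hi
    rw [hIdef, Finset.mem_filter] at hi
    rw [← Int.natAbs_natCast (ℓ i), Int.natAbs_dvd_natAbs]
    exact hi.2
  have hIcdvd : ((Iᶜ.lcm ℓ : ℕ) : ℤ) ∣ k - c := by
    rw [← Int.natAbs_dvd_natAbs, Int.natAbs_natCast]
    apply Finset.lcm_dvd
    intro i hi
    rw [← Int.natAbs_natCast (ℓ i), Int.natAbs_dvd_natAbs]
    rw [Finset.mem_compl, hIdef, Finset.mem_filter] at hi
    have hikb : ¬(ℓ i : ℤ) ∣ (k - b) := fun hd => hi ⟨Finset.mem_univ i, hd⟩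
    obtain ⟨x, hx⟩ := exists_point_with_cycle_length ℓ hℓ g hg i
    rcases cond x with ⟨c1, c2⟩
    rw [hx] at c1 c2
    by_cases hcb : (ℓ i : ℤ) ∣ c - b
    · exact absurd (c1 hcb) hikb
    · rcases c2 hcb with h1 | h2
      · exact absurd h1 hikb
      · exact h2
  rcases hI I with hd | hd
  · left
    have hdd : ((orderOf g : ℕ) : ℤ) ∣ k - b := hd ▸ hIdvd
    have h1 : g ^ (k - b) = 1 := orderOf_dvd_iff_zpow_eq_one.mp hdd
    have h2 : g ^ k = g ^ b * g ^ (k - b) := by rw [← zpow_add]; ring_nf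
    rw [h2, h1, mul_one]
  · right
    have hdd : ((orderOf g : ℕ) : ℤ) ∣ k - c := hd ▸ hIcdvd
    have h1 : g ^ (k - c) = 1 := orderOf_dvd_iff_zpow_eq_one.mp hdd
    have h2 : g ^ k = g ^ c * g ^ (k - c) := by rw [← zpow_add]; ring_nf
    rw [h2, h1, mul_one]

private lemma face_convexHull {E : Type*} [AddCommGroup E] [Module ℝ E]
    (s T : Finset E) (l : E →ₗ[ℝ] ℝ) (c : ℝ)
    (hTs : T ⊆ s) (hTne : T.Nonempty)
    (hle : ∀ y ∈ s, l y ≤ c) (heq : ∀ y ∈ s, (l y = c ↔ y ∈ T)) :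
    {x ∈ convexHull ℝ (s : Set E) | ∀ y ∈ convexHull ℝ (s : Set E), l y ≤ l x}
      = convexHull ℝ (T : Set E) := by
  have hhull_le : ∀ y ∈ convexHull ℝ (s : Set E), l y ≤ c :=
    fun y hy => convexHull_min hle (convex_halfSpace_le l.isLinear c) hy
  have hThull : ∀ y ∈ convexHull ℝ (T : Set E), l y = c :=
    fun y hy => convexHull_min (fun z hz => (heq z (hTs hz)).mpr hz)
      (convex_hyperplane l.isLinear c) hy
  apply Set.Subset.antisymm
  · rintro x ⟨hxconv, hmax⟩
    obtain ⟨y₀, hy₀⟩ := hTne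
    have hy₀s : (y₀ : E) ∈ convexHull ℝ (s : Set E) :=
      subset_convexHull ℝ _ (hTs hy₀)
    have hxc : l x = c :=
      le_antisymm (hhull_le x hxconv) ((heq y₀ (hTs hy₀)).mpr hy₀ ▸ hmax y₀ hy₀s)
    rw [Finset.convexHull_eq] at hxconv
    obtain ⟨w, hw0, hw1, hwx⟩ := hxconv
    have hlx : ∑ y ∈ s, w y * l y = c := by
      have h3 : l x = ∑ y ∈ s, w y * l y := by
        rw [← hwx, Finset.centerMass_eq_of_sum_1 _ _ hw1, map_sum]
        simp [smul_eq_mul]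
      rw [← h3, hxc]
    have hzero : ∀ y ∈ s, w y * (c - l y) = 0 := by
      rw [← Finset.sum_eq_zero_iff_of_nonneg
        (fun y hy => mul_nonneg (hw0 y hy) (sub_nonneg.mpr (hle y hy)))]
      have h4 : ∑ y ∈ s, w y * (c - l y) = (∑ y ∈ s, w y) * c - ∑ y ∈ s, w y * l y := by
        rw [Finset.sum_mul, ← Finset.sum_sub_distrib]
        congr 1; ext y; ring
      rw [h4, hw1, hlx, one_mul, sub_self]
    have hwzero : ∀ y ∈ s, y ∉ T → w y = 0 := by
      intro y hy hyT
      have hlt : l y ≠ c := fun h => hyT ((heq y hy).mp h)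
      rcases mul_eq_zero.mp (hzero y hy) with h | h
      · exact h
      · exact absurd (by linarith [sub_eq_zero.mp h] : l y = c) hlt
    have hxT : x = T.centerMass w id := by
      rw [← hwx, Finset.centerMass_subset id hTs hwzero]
    have hsumT : ∑ y ∈ T, w y = 1 := by
      rw [← hw1]; exact Finset.sum_subset hTs (fun y hy hyT => hwzero y hy hyT)
    rw [hxT]
    exact T.centerMass_mem_convexHull (fun y hy => hw0 y (hTs hy))
      (by rw [hsumT]; norm_num) (fun y hy => hy)
  · intro x hx
    refine ⟨convexHull_mono hTs hx, fun y hy => ?_⟩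
    rw [hThull x hx]
    exact hhull_le y hy

private lemma matrix_identity {t : ℕ} (ℓ : Fin t → ℕ)
    (g : Equiv.Perm (Fin n)) (hg : g.cycleType = Multiset.map ℓ Finset.univ.val)
    (I : Finset (Fin t)) (p q : ℕ)
    (hp : ∀ i ∈ I, ℓ i ∣ p) (hq : ∀ i ∉ I, ℓ i ∣ q) :
    (1 : Equiv.Perm (Fin n)).permMatrix ℝ + (g^(p+q)).permMatrix ℝ
      = (g^p).permMatrix ℝ + (g^q).permMatrix ℝ := by
  ext x y
  simp only [Matrix.add_apply, permMatrix_apply, Equiv.Perm.one_apply]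
  have hdvd : (orderOf (g.cycleOf x) : ℤ) ∣ (p : ℤ) ∨ (orderOf (g.cycleOf x) : ℤ) ∣ (q : ℤ) := by
    rcases cycle_length_mem ℓ g hg x with h1 | ⟨i, hi⟩
    · left; rw [h1]; exact one_dvd _
    · by_cases hiI : i ∈ I
      · left; rw [← hi]; exact_mod_cast hp i hiI
      · right; rw [← hi]; exact_mod_cast hq i hiI
  have hppq : (g : Equiv.Perm (Fin n)) ^ (p + q) = g ^ p * g ^ q := pow_add g p q
  rcases hdvd with hdp | hdq
  · have hfix : (g ^ p) x = x := by
      have := (zpow_apply_eq_self_iff g x (p : ℤ)).mpr hdp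
      rwa [zpow_natCast] at this
    have ha : (g ^ (p + q)) x = (g ^ q) x := by
      rw [add_comm p q, pow_add, Equiv.Perm.mul_apply, hfix]
    rw [hfix, ha]
    rfl
  · have hfix : (g ^ q) x = x := by
      have := (zpow_apply_eq_self_iff g x (q : ℤ)).mpr hdq
      rwa [zpow_natCast] at this
    have ha : (g ^ (p + q)) x = (g ^ p) x := by
      rw [pow_add, Equiv.Perm.mul_apply, hfix]
    rw [hfix, ha]
    exact add_comm _ _

end AuxLemmas

/-- The vertex–edge graph of `P(⟨g⟩)` is complete iff for every subset `I` of the set of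
cycles of `g`, `d_I = d` or `d_{Iᶜ} = d`, where `d_I = lcm(ℓ i : i ∈ I)` and
`d = orderOf g`. -/
theorem complete_graph_iff
    (n t : ℕ) (ℓ : Fin t → ℕ) (hℓ : ∀ i, 2 ≤ ℓ i)
    (g : Equiv.Perm (Fin n))
    (hg : g.cycleType = Multiset.map ℓ Finset.univ.val) :
    (∀ u v : Equiv.Perm (Fin n), u ∈ Subgroup.zpowers g → v ∈ Subgroup.zpowers g →
        u ≠ v →
        IsExposed ℝ (permPolytope n (Subgroup.zpowers g))
          (convexHull ℝ {u.permMatrix ℝ, v.permMatrix ℝ}))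
      ↔ ∀ I : Finset (Fin t), I.lcm ℓ = orderOf g ∨ Iᶜ.lcm ℓ = orderOf g := by
  classical
  constructor
  · -- completeness implies the lcm condition
    intro hcomp I
    by_contra hcon
    push_neg at hcon
    obtain ⟨hpne, hqne⟩ := hcon
    set d := orderOf g with hddef
    set p := I.lcm ℓ with hpdef
    set q := Iᶜ.lcm ℓ with hqdef
    have hd : Finset.univ.lcm ℓ = d := lcm_eq_orderOf ℓ g hg
    have hdpos : 0 < d := orderOf_pos g
    have hpdvd : p ∣ d := by
      rw [← hd]; exact Finset.lcm_dvd fun i hi => Finset.dvd_lcm (Finset.mem_univ i)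
    have hqdvd : q ∣ d := by
      rw [← hd]; exact Finset.lcm_dvd fun i hi => Finset.dvd_lcm (Finset.mem_univ i)
    have hplt : p < d := lt_of_le_of_ne (Nat.le_of_dvd hdpos hpdvd) hpne
    have hqlt : q < d := lt_of_le_of_ne (Nat.le_of_dvd hdpos hqdvd) hqne
    have hppos : 0 < p := by
      rcases Nat.eq_zero_or_pos p with h0 | h; · rw [h0] at hpdvd; omega
      · exact h
    have hqpos : 0 < q := by
      rcases Nat.eq_zero_or_pos q with h0 | h; · rw [h0] at hqdvd; omega
      · exact h
    have hlcmpq : Nat.lcm p q = d := by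
      apply Nat.dvd_antisymm (Nat.lcm_dvd hpdvd hqdvd)
      rw [← hd]
      apply Finset.lcm_dvd
      intro i _
      by_cases hiI : i ∈ I
      · exact dvd_trans (Finset.dvd_lcm hiI) (Nat.dvd_lcm_left p q)
      · exact dvd_trans (Finset.dvd_lcm (Finset.mem_compl.mpr hiI)) (Nat.dvd_lcm_right p q)
    set a := p + q with hadef
    have hnda : ¬ d ∣ a := by
      intro hda
      have h1 : d ≤ a := Nat.le_of_dvd (by omega) hda
      have h3 : d ∣ a - d := Nat.dvd_sub hda dvd_rfl
      have h4 : a = d := by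
        by_cases h5 : a - d = 0
        · omega
        · have := Nat.le_of_dvd (by omega) h3
          omega
      have hpq : p ∣ q := by
        have hpa : p ∣ p + q := by rw [← hadef, h4]; exact hpdvd
        exact (Nat.dvd_add_right dvd_rfl).mp hpa
      have hlq : Nat.lcm p q = q :=
        Nat.dvd_antisymm (Nat.lcm_dvd hpq dvd_rfl) (Nat.dvd_lcm_right p q)
      rw [hlq] at hlcmpq
      omega
    have hga : g ^ a ≠ 1 := fun h => hnda (orderOf_dvd_iff_pow_eq_one.mpr h)
    have hune : (1 : Equiv.Perm (Fin n)) ≠ g ^ a := fun h => hga h.symm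
    have hexp := hcomp 1 (g ^ a) (Subgroup.one_mem _)
      (Subgroup.mem_zpowers_iff.mpr ⟨(a : ℤ), zpow_natCast g a⟩) hune
    have hext := hexp.isExtreme
    have hmid : (1 : Equiv.Perm (Fin n)).permMatrix ℝ + (g ^ a).permMatrix ℝ
        = (g ^ p).permMatrix ℝ + (g ^ q).permMatrix ℝ := by
      have := matrix_identity ℓ g hg I p q (fun i hi => Finset.dvd_lcm hi)
        (fun i hi => Finset.dvd_lcm (Finset.mem_compl.mpr hi))
      rwa [← hadef] at this
    have hzB : (2⁻¹ : ℝ) • (1 : Equiv.Perm (Fin n)).permMatrix ℝ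
          + (2⁻¹ : ℝ) • (g ^ a).permMatrix ℝ
        ∈ convexHull ℝ {(1 : Equiv.Perm (Fin n)).permMatrix ℝ, (g ^ a).permMatrix ℝ} := by
      rw [convexHull_pair]
      exact ⟨2⁻¹, 2⁻¹, by norm_num, by norm_num, by norm_num, rfl⟩
    have hMpA : (g ^ p).permMatrix ℝ ∈ permPolytope n (Subgroup.zpowers g) :=
      subset_convexHull ℝ _ ⟨g ^ p, Subgroup.mem_zpowers_iff.mpr ⟨(p : ℤ), zpow_natCast g p⟩, rfl⟩
    have hMqA : (g ^ q).permMatrix ℝ ∈ permPolytope n (Subgroup.zpowers g) :=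
      subset_convexHull ℝ _ ⟨g ^ q, Subgroup.mem_zpowers_iff.mpr ⟨(q : ℤ), zpow_natCast g q⟩, rfl⟩
    have hzseg : (2⁻¹ : ℝ) • (1 : Equiv.Perm (Fin n)).permMatrix ℝ
          + (2⁻¹ : ℝ) • (g ^ a).permMatrix ℝ
        ∈ openSegment ℝ ((g ^ p).permMatrix ℝ) ((g ^ q).permMatrix ℝ) := by
      refine ⟨2⁻¹, 2⁻¹, by norm_num, by norm_num, by norm_num, ?_⟩
      rw [← smul_add, ← smul_add, hmid]
    have hMpB := hext.left_mem_of_mem_openSegment hMpA hMqA hzB hzseg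
    rw [convexHull_pair] at hMpB
    obtain ⟨θa, θb, hθa, hθb, hθab, hθsum⟩ := hMpB
    obtain ⟨x₀, hx₀⟩ : ∃ x₀, (g ^ a) x₀ ≠ x₀ := by
      by_contra hall; push_neg at hall
      exact hga (Equiv.ext fun x => hall x)
    have he := congrFun (congrFun hθsum x₀) x₀
    simp only [Matrix.add_apply, Matrix.smul_apply, smul_eq_mul, permMatrix_apply,
      Equiv.Perm.one_apply, eq_self_iff_true, if_true, if_neg hx₀, mul_one, mul_zero,
      add_zero] at he
    by_cases hfix : (g ^ p) x₀ = x₀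
    · rw [if_pos hfix] at he
      have hθb0 : θb = 0 := by linarith
      have hθa1 : θa = 1 := by linarith
      rw [hθa1, hθb0, one_smul, zero_smul, add_zero] at hθsum
      have : (1 : Equiv.Perm (Fin n)) = g ^ p := permMatrix_injective hθsum
      have hdp : d ∣ p := orderOf_dvd_iff_pow_eq_one.mpr this.symm
      have := Nat.le_of_dvd hppos hdp
      omega
    · rw [if_neg hfix] at he
      have hθa0 : θa = 0 := he
      have hθb1 : θb = 1 := by linarith
      rw [hθa0, hθb1, one_smul, zero_smul, zero_add] at hθsum
      have hva : g ^ a = g ^ p := permMatrix_injective hθsum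
      have hq1 : g ^ q = 1 := by
        have h5 : g ^ p * g ^ q = g ^ p * 1 := by
          rw [mul_one, ← pow_add, ← hadef, hva]
        exact mul_left_cancel h5
      have hdq : d ∣ q := orderOf_dvd_iff_pow_eq_one.mpr hq1
      have := Nat.le_of_dvd hqpos hdq
      omega
  · -- the lcm condition implies completeness
    intro hI u v hu hv huv
    intro _
    obtain ⟨b, hb⟩ := Subgroup.mem_zpowers_iff.mp hu
    obtain ⟨c, hc⟩ := Subgroup.mem_zpowers_iff.mp hv
    set S : Finset (Matrix (Fin n) (Fin n) ℝ) :=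
      (Finset.univ.filter (fun σ : Equiv.Perm (Fin n) => σ ∈ Subgroup.zpowers g)).image
        (fun σ => σ.permMatrix ℝ) with hSdef
    set T : Finset (Matrix (Fin n) (Fin n) ℝ) := {u.permMatrix ℝ, v.permMatrix ℝ} with hTdef
    have hTs : T ⊆ S := by
      intro y hy
      rw [hTdef, Finset.mem_insert, Finset.mem_singleton] at hy
      rcases hy with h | h
      · exact Finset.mem_image.mpr ⟨u, Finset.mem_filter.mpr ⟨Finset.mem_univ u, hu⟩, h.symm⟩
      · exact Finset.mem_image.mpr ⟨v, Finset.mem_filter.mpr ⟨Finset.mem_univ v, hv⟩, h.symm⟩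
    have hTne : T.Nonempty := ⟨u.permMatrix ℝ, Finset.mem_insert_self _ _⟩
    have hle : ∀ y ∈ S, lfun u v y ≤ lfun u v (u.permMatrix ℝ) := by
      intro y hy
      obtain ⟨σ, hσ, rfl⟩ := Finset.mem_image.mp hy
      exact lfun_le u v σ
    have heq : ∀ y ∈ S, (lfun u v y = lfun u v (u.permMatrix ℝ) ↔ y ∈ T) := by
      intro y hy
      obtain ⟨σ, hσf, rfl⟩ := Finset.mem_image.mp hy
      obtain ⟨k, hk⟩ := Subgroup.mem_zpowers_iff.mp (Finset.mem_filter.mp hσf).2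
      constructor
      · intro hEq
        have h2 : g ^ k = g ^ b ∨ g ^ k = g ^ c := by
          apply eq_of_lfun_eq ℓ hℓ g hg hI b c k
          rw [hb, hc, hk]
          exact hEq
        rw [hTdef, Finset.mem_insert, Finset.mem_singleton]
        rcases h2 with h | h
        · left; rw [show σ = u from hk.symm.trans (h.trans hb)]
        · right; rw [show σ = v from hk.symm.trans (h.trans hc)]
      · intro hyT
        rw [hTdef, Finset.mem_insert, Finset.mem_singleton] at hyT
        rcases hyT with h | h
        · rw [h]
        · rw [h]; exact lfun_v_eq u v
    refine ⟨LinearMap.toContinuousLinearMap (lfun u v), ?_⟩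
    have hPP : permPolytope n (Subgroup.zpowers g) = convexHull ℝ (S : Set _) := by
      rw [permPolytope]
      congr 1
      ext M
      simp only [hSdef, Finset.coe_image, Finset.coe_filter, Finset.mem_univ, true_and,
        Set.mem_image, Set.mem_setOf_eq]
      constructor
      · rintro ⟨σ, h1, h2⟩; exact ⟨σ, h1, h2.symm⟩
      · rintro ⟨σ, h1, h2⟩; exact ⟨σ, h1, h2.symm⟩
    have hTset : ({u.permMatrix ℝ, v.permMatrix ℝ} : Set (Matrix (Fin n) (Fin n) ℝ))
        = (T : Set _) := by
      rw [hTdef]; simp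
    rw [hPP, hTset]
    simp only [LinearMap.coe_toContinuousLinearMap']
    exact (face_convexHull S T (lfun u v) (lfun u v (u.permMatrix ℝ)) hTs hTne hle heq).symm
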